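/- Let K be a field, α, λ ∈ K∖{0} and μ ∈ K. Then the quartic polynomial G_α = λ²·z·(αz−x)³ + α²·x·y²·(μ·(αz−x) − α·λ·y) is irreducible as an element of K̄[x,y,z], where K̄ is an algebraic closure of K. -/

import Mathlib

/-!  Formalization of a statement from "Two kinds of examples of curves with
isomorphic complements" (J. Blanc).  `Gq K θ l m` is the homogeneous quartic
`G_θ = λ²·z·(θz−x)³ + θ²·x·y²·(μ·(θz−x) − θ·λ·y)` in `K[x,y,z]`, where the
variables `x, y, z` are `X 0, X 1, X 2` and `l = λ`, `m = μ`. -/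

open Polynomial in
/-- A linear polynomial `a•X + b` over a domain whose coefficients have no common
non-unit divisor is irreducible. -/
lemma irr_linear' {R : Type*} [CommRing R] [IsDomain R] {a b : R} (ha : a ≠ 0)
    (h : ∀ d : R, d ∣ a → d ∣ b → IsUnit d) :
    Irreducible (Polynomial.C a * Polynomial.X + Polynomial.C b) := by
  constructor
  · intro hu
    have h1 := natDegree_eq_zero_of_isUnit hu
    rw [natDegree_linear ha] at h1
    omega
  · intro s t hst
    have hp0 : C a * X + C b ≠ 0 := by
      intro h0
      have := natDegree_linear ha (b := b)
      rw [h0] at this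
      simp at this
    have hs0 : s ≠ 0 := by rintro rfl; simp at hst; exact hp0 hst
    have ht0 : t ≠ 0 := by rintro rfl; simp at hst; exact hp0 hst
    have hdeg : s.natDegree + t.natDegree = 1 := by
      rw [← Polynomial.natDegree_mul hs0 ht0, ← hst, natDegree_linear ha]
    have hc1 : (C a * X + C b).coeff 1 = a := by simp
    have hc0 : (C a * X + C b).coeff 0 = b := by simp
    rcases Nat.eq_zero_or_pos s.natDegree with h0 | hpos
    · obtain ⟨c, rfl⟩ : ∃ c, s = C c := ⟨s.coeff 0, (eq_C_of_natDegree_eq_zero h0)⟩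
      left
      rw [isUnit_C]
      refine h c ⟨t.coeff 1, ?_⟩ ⟨t.coeff 0, ?_⟩
      · rw [← hc1, hst, coeff_C_mul]
      · rw [← hc0, hst, coeff_C_mul]
    · have h0 : t.natDegree = 0 := by omega
      obtain ⟨c, rfl⟩ : ∃ c, t = C c := ⟨t.coeff 0, (eq_C_of_natDegree_eq_zero h0)⟩
      right
      rw [isUnit_C]
      refine h c ⟨s.coeff 1, ?_⟩ ⟨s.coeff 0, ?_⟩
      · rw [← hc1, hst, mul_comm, coeff_C_mul]
      · rw [← hc0, hst, mul_comm, coeff_C_mul]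

open MvPolynomial

noncomputable section

/-- The quartic `G_θ = λ²·z·(θz−x)³ + θ²·x·y²·(μ·(θz−x) − θ·λ·y)`. -/
def Gq (K : Type) [Field K] (t l m : K) : MvPolynomial (Fin 3) K :=
  C (l ^ 2) * X 2 * (C t * X 2 - X 0) ^ 3 +
    C (t ^ 2) * X 0 * (X 1) ^ 2 * (C m * (C t * X 2 - X 0) - C (t * l) * X 1)

lemma myFinSuccEquiv_C {R : Type*} [CommSemiring R] (n : ℕ) (c : R) :
    finSuccEquiv R n (C c) = Polynomial.C (C c) := by
  simp [finSuccEquiv_apply]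

variable {F : Type} [Field F]

/-- `X 1` is prime in `F[X 0, X 1]`. -/
lemma prime_X1 : Prime (X 1 : MvPolynomial (Fin 2) F) := by
  let e : MvPolynomial (Fin 2) F ≃ₐ[F] Polynomial (MvPolynomial (Fin 1) F) :=
    (renameEquiv F (Equiv.swap (0 : Fin 2) 1)).trans (finSuccEquiv F 1)
  have he : e (X 1) = Polynomial.X := by
    simp only [e, AlgEquiv.trans_apply, renameEquiv_apply, rename_X,
      Equiv.swap_apply_right]
    exact finSuccEquiv_X_zero
  refine (MulEquiv.prime_iff e.toRingEquiv.toMulEquiv).mp ?_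
  rw [show (e.toRingEquiv.toMulEquiv (X 1)) = e (X 1) from rfl, he]
  exact Polynomial.prime_X

/-- The two coefficients of the dehomogenized quartic (viewed as a linear polynomial in the
first variable) have no common non-unit divisor. -/
lemma common_div (a l m : F) (ha : a ≠ 0) (hl : l ≠ 0) (d : MvPolynomial (Fin 2) F)
    (hdA : d ∣ (C (l ^ 2 * a ^ 3) * X 1 ^ 3 + C (a ^ 4 * m) * X 0 ^ 2 * X 1
      - C (a ^ 4 * l) * X 0 ^ 3))
    (hdB : d ∣ (C (l ^ 2 * a ^ 3) * X 1 ^ 4)) : IsUnit d := by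
  set A : MvPolynomial (Fin 2) F := C (l ^ 2 * a ^ 3) * X 1 ^ 3 + C (a ^ 4 * m) * X 0 ^ 2 * X 1
      - C (a ^ 4 * l) * X 0 ^ 3 with hA
  by_contra hd
  -- the key evaluation homomorphism  X 0 ↦ X, X 1 ↦ 0
  set ψ : MvPolynomial (Fin 2) F →ₐ[F] Polynomial F := aeval ![Polynomial.X, 0] with hψ
  have hψA : ψ A = - Polynomial.C (a ^ 4 * l) * Polynomial.X ^ 3 := by
    simp [hA, hψ, algebraMap_eq]
  have hψA0 : ψ A ≠ 0 := by
    rw [hψA]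
    simp only [neg_mul, ne_eq, neg_eq_zero, mul_eq_zero, not_or]
    constructor
    · simp only [Polynomial.C_eq_zero]
      exact mul_ne_zero (pow_ne_zero _ ha) hl
    · exact pow_ne_zero _ Polynomial.X_ne_zero
  have hA0 : A ≠ 0 := fun h => hψA0 (by rw [h, map_zero])
  have hd0 : d ≠ 0 := fun h => hA0 (zero_dvd_iff.mp (h ▸ hdA))
  obtain ⟨q, hqirr, hqd⟩ := WfDvdMonoid.exists_irreducible_factor hd hd0
  have hqB : q ∣ C (l ^ 2 * a ^ 3) * X 1 ^ 4 := hqd.trans hdB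
  have hCu : IsUnit (C (l ^ 2 * a ^ 3) : MvPolynomial (Fin 2) F) :=
    (isUnit_iff_ne_zero.mpr (mul_ne_zero (pow_ne_zero _ hl) (pow_ne_zero _ ha))).map C
  have hqX4 : q ∣ X 1 ^ 4 := (IsUnit.dvd_mul_left hCu).mp hqB
  have hqprime : Prime q := UniqueFactorizationMonoid.irreducible_iff_prime.mp hqirr
  have hqX : q ∣ (X 1 : MvPolynomial (Fin 2) F) := hqprime.dvd_of_dvd_pow hqX4
  have hassoc : Associated q (X 1 : MvPolynomial (Fin 2) F) :=
    hqirr.associated_of_dvd prime_X1.irreducible hqX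
  have hXA : (X 1 : MvPolynomial (Fin 2) F) ∣ A := hassoc.symm.dvd.trans (hqd.trans hdA)
  have : ψ (X 1) ∣ ψ A := map_dvd ψ hXA
  rw [show ψ (X 1) = 0 by simp [hψ]] at this
  exact hψA0 (zero_dvd_iff.mp this)

/-- The change of variables `x ↦ a·x`, `z ↦ x + z` (so that `a·z − x ↦ a·z`). -/
def chg (a : F) (ha : a ≠ 0) : MvPolynomial (Fin 3) F ≃ₐ[F] MvPolynomial (Fin 3) F :=
  AlgEquiv.ofAlgHom
    (aeval ![C a * X 0, X 1, X 0 + X 2])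
    (aeval ![C a⁻¹ * X 0, X 1, X 2 - C a⁻¹ * X 0])
    (by
      have key : (C a⁻¹ : MvPolynomial (Fin 3) F) * C a = 1 := by
        rw [← C_mul, inv_mul_cancel₀ ha, C_1]
      apply MvPolynomial.algHom_ext
      intro i
      fin_cases i <;> simp <;>
        first
          | linear_combination (X 0 : MvPolynomial (Fin 3) F) * key
          | linear_combination (-(X 0) : MvPolynomial (Fin 3) F) * key)
    (by
      have key : (C a : MvPolynomial (Fin 3) F) * C a⁻¹ = 1 := by
        rw [← C_mul, mul_inv_cancel₀ ha, C_1]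
      apply MvPolynomial.algHom_ext
      intro i
      fin_cases i <;> simp <;>
        first
          | linear_combination (X 0 : MvPolynomial (Fin 3) F) * key
          | linear_combination (-(X 0) : MvPolynomial (Fin 3) F) * key)

/-- After the change of variables, `Gq` becomes linear in the first variable. -/
lemma key_eq (a l m : F) (ha : a ≠ 0) :
    (finSuccEquiv F 2) (chg a ha (Gq F a l m)) =
      Polynomial.C (C (l ^ 2 * a ^ 3) * X 1 ^ 3 + C (a ^ 4 * m) * X 0 ^ 2 * X 1
          - C (a ^ 4 * l) * X 0 ^ 3) * Polynomial.X
        + Polynomial.C (C (l ^ 2 * a ^ 3) * X 1 ^ 4) := by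
  have h1 : (X 1 : MvPolynomial (Fin 3) F) = X (0 : Fin 2).succ := rfl
  have h2 : (X 2 : MvPolynomial (Fin 3) F) = X (1 : Fin 2).succ := rfl
  simp only [Gq, chg, AlgEquiv.ofAlgHom_apply, map_add, map_mul, map_sub, map_pow,
    aeval_X, aeval_C, algebraMap_eq, Matrix.cons_val_zero, Matrix.cons_val_one,
    Matrix.head_cons, Matrix.cons_val_two, Matrix.tail_cons]
  simp only [h1, h2, map_add, map_mul, map_sub, map_pow, finSuccEquiv_X_zero,
    finSuccEquiv_X_succ, myFinSuccEquiv_C, C_mul, C_pow, Polynomial.C_mul, Polynomial.C_pow,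
    Polynomial.C_add, Polynomial.C_sub]
  ring

/-- The quartic `Gq` is irreducible over any field. -/
lemma gq_irred (a l : F) (ha : a ≠ 0) (hl : l ≠ 0) (m : F) : Irreducible (Gq F a l m) := by
  -- the coefficient of `X` is nonzero
  have hψA : (aeval ![Polynomial.X, (0 : Polynomial F)] :
        MvPolynomial (Fin 2) F →ₐ[F] Polynomial F)
        (C (l ^ 2 * a ^ 3) * X 1 ^ 3 + C (a ^ 4 * m) * X 0 ^ 2 * X 1
          - C (a ^ 4 * l) * X 0 ^ 3)
      = - Polynomial.C (a ^ 4 * l) * Polynomial.X ^ 3 := by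
    simp [algebraMap_eq]
  have hne : (- Polynomial.C (a ^ 4 * l) * Polynomial.X ^ 3 : Polynomial F) ≠ 0 := by
    simp only [neg_mul, ne_eq, neg_eq_zero, mul_eq_zero, not_or]
    constructor
    · simp only [Polynomial.C_eq_zero]
      exact mul_ne_zero (pow_ne_zero _ ha) hl
    · exact pow_ne_zero _ Polynomial.X_ne_zero
  have hA0 : (C (l ^ 2 * a ^ 3) * X 1 ^ 3 + C (a ^ 4 * m) * X 0 ^ 2 * X 1
      - C (a ^ 4 * l) * X 0 ^ 3 : MvPolynomial (Fin 2) F) ≠ 0 := by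
    intro h
    exact hne (by rw [← hψA, h, map_zero])
  have hlin := irr_linear' hA0 (common_div a l m ha hl)
  exact (MulEquiv.irreducible_iff
      (((chg a ha).trans (finSuccEquiv F 2)).toRingEquiv.toMulEquiv)).mp
    (by
      rw [show (((chg a ha).trans (finSuccEquiv F 2)).toRingEquiv.toMulEquiv) (Gq F a l m)
          = (finSuccEquiv F 2) (chg a ha (Gq F a l m)) from rfl, key_eq a l m ha]
      exact hlin)

lemma map_Gq {K L : Type} [Field K] [Field L] (f : K →+* L) (t l m : K) :
    MvPolynomial.map f (Gq K t l m) = Gq L (f t) (f l) (f m) := by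
  simp [Gq, map_add, map_mul, map_sub, map_pow, map_C, map_X]

/-- the quartic `G_α` is irreducible over the algebraic closure of `K`. -/
theorem statement8 (K : Type) [Field K] (a l : K) (ha : a ≠ 0) (hl : l ≠ 0) (m : K) :
    Irreducible (MvPolynomial.map (algebraMap K (AlgebraicClosure K)) (Gq K a l m)) := by
  rw [map_Gq]
  have hinj := (algebraMap K (AlgebraicClosure K)).injective
  refine gq_irred _ _ ?_ ?_ _
  · intro h
    exact ha (hinj (by rw [h, map_zero]))
  · intro h
    exact hl (hinj (by rw [h, map_zero]))

end
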